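/- Under the stated hypotheses, the operator inequality Ĥ^ℏ ≥ ℏ²D_x² + μ₁ f^{2/(2+a)}(x) holds: for every u in the form domain, ⟨Ĥ^ℏ u, u⟩ ≥ ∫∫ (ℏ²|∇_x u|² + μ₁ f^{2/(2+a)}(x)|u|²) dx dy. -/

import Mathlib

open MeasureTheory Filter Metric Set

noncomputable section

/-- Partial derivative of a complex-valued function on `ℝⁿ` in coordinate `i`. -/
def pd {n : ℕ} (i : Fin n) (u : (Fin n → ℝ) → ℂ) : (Fin n → ℝ) → ℂ :=
  fun x => fderiv ℝ u x (Pi.single i 1)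

/-- Partial derivative of a real-valued function. -/
def pdR {n : ℕ} (i : Fin n) (f : (Fin n → ℝ) → ℝ) : (Fin n → ℝ) → ℝ :=
  fun x => fderiv ℝ f x (Pi.single i 1)

/-- The Laplacian. -/
def lap {n : ℕ} (u : (Fin n → ℝ) → ℂ) : (Fin n → ℝ) → ℂ :=
  fun x => ∑ i, pd i (pd i u) x

/-- The quadratic form of `c·D_x² + V` on `L²(ℝⁿ)`. -/
def qf {n : ℕ} (c : ℝ) (V : (Fin n → ℝ) → ℝ) (u : (Fin n → ℝ) → ℂ) : ℝ :=
  ∫ x, (c * ∑ i, ‖pd i u x‖ ^ 2 + V x * ‖u x‖ ^ 2)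

/-- Squared `L²` norm. -/
def nrm2 {n : ℕ} (u : (Fin n → ℝ) → ℂ) : ℝ := ∫ x, ‖u x‖ ^ 2

/-- `lambdaK n c V k` : the `k`-th eigenvalue (`k ≥ 1`, counted with multiplicity)
of the Schrödinger operator `c·D_x² + V` on `L²(ℝⁿ)`, defined through the
Courant–Fischer min–max principle over `k`-dimensional subspaces of test functions. -/
def lambdaK (n : ℕ) (c : ℝ) (V : (Fin n → ℝ) → ℝ) (k : ℕ) : ℝ :=
  sInf { r : ℝ | ∃ E : Submodule ℂ ((Fin n → ℝ) → ℂ),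
    Module.finrank ℂ E = k ∧
    (∀ u ∈ E, ContDiff ℝ (⊤ : ℕ∞) u ∧ HasCompactSupport u) ∧
    (∀ u ∈ E, qf c V u ≤ r * nrm2 u) }

/-- An eigenpair of the Schrödinger operator `c·D_x² + V` on `L²(ℝⁿ)`. -/
def IsEigenpair {n : ℕ} (c : ℝ) (V : (Fin n → ℝ) → ℝ) (μ : ℝ)
    (u : (Fin n → ℝ) → ℂ) : Prop :=
  ContDiff ℝ (⊤ : ℕ∞) u ∧ u ≠ 0 ∧ MemLp u 2 volume ∧
    ∀ x, -(c : ℂ) * lap u x + (V x : ℂ) * u x = (μ : ℂ) * u x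

def pdx {n m : ℕ} (i : Fin n) (u : (Fin n → ℝ) × (Fin m → ℝ) → ℂ) :
    (Fin n → ℝ) × (Fin m → ℝ) → ℂ :=
  fun z => fderiv ℝ u z (Pi.single i 1, 0)

def pdy {n m : ℕ} (i : Fin m) (u : (Fin n → ℝ) × (Fin m → ℝ) → ℂ) :
    (Fin n → ℝ) × (Fin m → ℝ) → ℂ :=
  fun z => fderiv ℝ u z (0, Pi.single i 1)

def lapx {n m : ℕ} (u : (Fin n → ℝ) × (Fin m → ℝ) → ℂ) :
    (Fin n → ℝ) × (Fin m → ℝ) → ℂ :=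
  fun z => ∑ i, pdx i (pdx i u) z

def lapy {n m : ℕ} (u : (Fin n → ℝ) × (Fin m → ℝ) → ℂ) :
    (Fin n → ℝ) × (Fin m → ℝ) → ℂ :=
  fun z => ∑ i, pdy i (pdy i u) z

/-- The quadratic form of `c₁·D_x² + c₂·D_y² + W` on `L²(ℝⁿ×ℝᵐ)`. -/
def qf2 (n m : ℕ) (c1 c2 : ℝ) (W : (Fin n → ℝ) × (Fin m → ℝ) → ℝ)
    (u : (Fin n → ℝ) × (Fin m → ℝ) → ℂ) : ℝ :=
  ∫ z, (c1 * ∑ i, ‖pdx i u z‖ ^ 2 + c2 * ∑ i, ‖pdy i u z‖ ^ 2 + W z * ‖u z‖ ^ 2)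

def nrm22 {n m : ℕ} (u : (Fin n → ℝ) × (Fin m → ℝ) → ℂ) : ℝ := ∫ z, ‖u z‖ ^ 2

/-- `k`-th min–max eigenvalue of `c₁·D_x² + c₂·D_y² + W` on `L²(ℝⁿ×ℝᵐ)`. -/
def lambdaK2 (n m : ℕ) (c1 c2 : ℝ) (W : (Fin n → ℝ) × (Fin m → ℝ) → ℝ) (k : ℕ) : ℝ :=
  sInf { r : ℝ | ∃ E : Submodule ℂ ((Fin n → ℝ) × (Fin m → ℝ) → ℂ),
    Module.finrank ℂ E = k ∧
    (∀ u ∈ E, ContDiff ℝ (⊤ : ℕ∞) u ∧ HasCompactSupport u) ∧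
    (∀ u ∈ E, qf2 n m c1 c2 W u ≤ r * nrm22 u) }

/-- An eigenpair of `c₁·D_x² + c₂·D_y² + W` on `L²(ℝⁿ×ℝᵐ)`. -/
def IsEigenpair2 {n m : ℕ} (c1 c2 : ℝ) (W : (Fin n → ℝ) × (Fin m → ℝ) → ℝ) (μ : ℝ)
    (u : (Fin n → ℝ) × (Fin m → ℝ) → ℂ) : Prop :=
  ContDiff ℝ (⊤ : ℕ∞) u ∧ u ≠ 0 ∧ MemLp u 2 volume ∧
    ∀ z, -(c1 : ℂ) * lapx u z - (c2 : ℂ) * lapy u z + (W z : ℂ) * u z = (μ : ℂ) * u z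

/-- Hypotheses on `g` : smooth away from `0`, positive and homogeneous of degree `a`. -/
structure GHyp (m : ℕ) (a : ℝ) (g : (Fin m → ℝ) → ℝ) : Prop where
  a_pos : 0 < a
  smooth : ContDiffOn ℝ (⊤ : ℕ∞) g {(0 : Fin m → ℝ)}ᶜ
  pos : ∀ y : Fin m → ℝ, y ≠ 0 → 0 < g y
  homog : ∀ μ : ℝ, 0 < μ → ∀ y : Fin m → ℝ, g (μ • y) = μ ^ a * g y

/-- Hypotheses on `f` : smooth, tempered derivatives, normalized nondegenerate
minimum at `0`, and `f(0) = 1 < liminf_{|x|→∞} f`. -/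
structure FHyp (n : ℕ) (f : (Fin n → ℝ) → ℝ) : Prop where
  smooth : ContDiff ℝ (⊤ : ℕ∞) f
  derivBound : ∀ k : ℕ, ∃ C : ℝ, ∀ x, ‖iteratedFDeriv ℝ k f x‖ ≤ C * (|f x| + 1)
  min0 : f 0 = 1
  ge_one : ∀ x, 1 ≤ f x
  liminf_gt : ∃ c > 1, ∀ᶠ x in cocompact (Fin n → ℝ), c ≤ f x
  hessPos : ∀ v : Fin n → ℝ, v ≠ 0 → 0 < iteratedFDeriv ℝ 2 f 0 ![v, v]

/-- The potential `f(x)g(y)` on `ℝⁿ×ℝᵐ`. -/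
def Wprod {n m : ℕ} (f : (Fin n → ℝ) → ℝ) (g : (Fin m → ℝ) → ℝ) :
    (Fin n → ℝ) × (Fin m → ℝ) → ℝ :=
  fun z => f z.1 * g z.2

/-- The effective potential `μ·f(x)^{2/(2+a)}`. -/
def effPot {n : ℕ} (f : (Fin n → ℝ) → ℝ) (a μ : ℝ) : (Fin n → ℝ) → ℝ :=
  fun x => μ * f x ^ (2 / (2 + a))

/-- The harmonic-oscillator potential `(μ₁/(2+a))⟨∂²f(0)x, x⟩`. -/
def hoPot {n : ℕ} (f : (Fin n → ℝ) → ℝ) (a μ1 : ℝ) : (Fin n → ℝ) → ℝ :=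
  fun x => μ1 / (2 + a) * iteratedFDeriv ℝ 2 f 0 ![x, x]



/-! ### Auxiliary lemmas -/

section Aux

lemma my_top_le : ((⊤ : ℕ∞) : WithTop ℕ∞) ≠ 0 := by simp

lemma myIntegrable {X : Type*} [TopologicalSpace X] [MeasureSpace X] [OpensMeasurableSpace X]
    [T2Space X] [IsFiniteMeasureOnCompacts (volume : Measure X)]
    {φ : X → ℝ} (hφ : Continuous φ) {K : Set X} (hK : IsCompact K)
    (h0 : ∀ z ∉ K, φ z = 0) : Integrable φ :=
  hφ.integrable_of_hasCompactSupport (HasCompactSupport.intro hK h0)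

variable {m : ℕ} {a : ℝ} {g : (Fin m → ℝ) → ℝ}

lemma g_zero (hg : GHyp m a g) : g 0 = 0 := by
  have h := hg.homog 2 (by norm_num) 0
  rw [smul_zero] at h
  have h2 : (1:ℝ) < (2:ℝ) ^ a := by
    exact (Real.one_lt_rpow_iff_of_pos (by norm_num : (0:ℝ) < 2)).mpr
      (Or.inl ⟨by norm_num, hg.a_pos⟩)
  nlinarith [hg.a_pos]

lemma g_nonneg (hg : GHyp m a g) : ∀ y, 0 ≤ g y := by
  intro y
  rcases eq_or_ne y 0 with rfl | hy
  · rw [g_zero hg]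
  · exact (hg.pos y hy).le

lemma g_cont (hm : 1 ≤ m) (hg : GHyp m a g) : Continuous g := by
  haveI : Inhabited (Fin m) := ⟨⟨0, hm⟩⟩
  haveI : Nontrivial (Fin m → ℝ) := Pi.nontrivial
  rw [continuous_iff_continuousAt]
  intro y
  rcases eq_or_ne y 0 with rfl | hy
  · have hsph : (Metric.sphere (0 : Fin m → ℝ) 1).Nonempty :=
      NormedSpace.sphere_nonempty.mpr zero_le_one
    have hsub : Metric.sphere (0 : Fin m → ℝ) 1 ⊆ {(0 : Fin m → ℝ)}ᶜ := by
      intro z hz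
      simp only [mem_sphere_iff_norm, sub_zero] at hz
      simp only [Set.mem_compl_iff, Set.mem_singleton_iff]
      intro h; rw [h] at hz; simp at hz
    obtain ⟨z₀, hz₀, hM'⟩ := (isCompact_sphere (0 : Fin m → ℝ) 1).exists_isMaxOn hsph
      (hg.smooth.continuousOn.mono hsub)
    have hM : ∀ z ∈ Metric.sphere (0 : Fin m → ℝ) 1, g z ≤ g z₀ := fun z hz => hM' hz
    have hbound : ∀ z : Fin m → ℝ, g z ≤ ‖z‖ ^ a * g z₀ := by
      intro z
      rcases eq_or_ne z 0 with rfl | hz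
      · rw [g_zero hg]
        have hz₀pos : 0 < g z₀ := hg.pos z₀ (hsub hz₀)
        simp only [norm_zero]
        rw [Real.zero_rpow (ne_of_gt hg.a_pos)]
        simp
      · have hnz : (0:ℝ) < ‖z‖ := norm_pos_iff.mpr hz
        have hunit : (‖z‖⁻¹ • z) ∈ Metric.sphere (0 : Fin m → ℝ) 1 := by
          simp [norm_smul, abs_of_pos (inv_pos.mpr hnz), inv_mul_cancel₀ (ne_of_gt hnz)]
        have heq : g z = ‖z‖ ^ a * g (‖z‖⁻¹ • z) := by
          have h := hg.homog ‖z‖ hnz (‖z‖⁻¹ • z)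
          rw [smul_smul, mul_inv_cancel₀ (ne_of_gt hnz), one_smul] at h
          rw [h]
        rw [heq]
        exact mul_le_mul_of_nonneg_left (hM _ hunit) (Real.rpow_nonneg hnz.le a)
    have hten : Filter.Tendsto (fun z : Fin m → ℝ => ‖z‖ ^ a * g z₀) (nhds 0) (nhds 0) := by
      have h1 : Filter.Tendsto (fun z : Fin m → ℝ => ‖z‖) (nhds 0) (nhds 0) := by
        simpa using (continuous_norm (E := Fin m → ℝ)).tendsto 0
      have h2 : Filter.Tendsto (fun t : ℝ => t ^ a) (nhds 0) (nhds 0) := by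
        have h3 := (Real.continuousAt_rpow_const 0 a (Or.inr hg.a_pos.le)).tendsto
        rwa [Real.zero_rpow (ne_of_gt hg.a_pos)] at h3
      simpa using (h2.comp h1).mul_const (g z₀)
    have hT : Filter.Tendsto g (nhds 0) (nhds 0) :=
      squeeze_zero (g_nonneg hg) hbound hten
    unfold ContinuousAt
    rwa [g_zero hg]
  · exact hg.smooth.continuousOn.continuousAt
      (IsOpen.mem_nhds isOpen_compl_singleton hy)

lemma pd_const_smul {k : ℕ} (i : Fin k) (v : (Fin k → ℝ) → ℂ)
    (hv : ContDiff ℝ (⊤ : ℕ∞) v) (c : ℂ) (x : Fin k → ℝ) :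
    pd i (c • v) x = c * pd i v x := by
  unfold pd
  have h : fderiv ℝ (c • v) x = c • fderiv ℝ v x :=
    fderiv_const_smul (hv.differentiable my_top_le x) c
  rw [h]
  simp

lemma continuous_pd {k : ℕ} (i : Fin k) (v : (Fin k → ℝ) → ℂ)
    (hv : ContDiff ℝ (⊤ : ℕ∞) v) : Continuous (pd i v) :=
  (hv.continuous_fderiv my_top_le).clm_apply continuous_const

lemma pd_zero_of_nmem {k : ℕ} (i : Fin k) (v : (Fin k → ℝ) → ℂ)
    {x : Fin k → ℝ} (hx : x ∉ tsupport v) : pd i v x = 0 := by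
  unfold pd
  have h : fderiv ℝ v x = 0 := by
    by_contra h
    exact hx (support_fderiv_subset ℝ (Function.mem_support.mpr h))
  rw [h]; rfl

lemma nrm2_pos {k : ℕ} (v : (Fin k → ℝ) → ℂ) (hv : Continuous v)
    (hvs : HasCompactSupport v) (hv0 : v ≠ 0) : 0 < nrm2 v := by
  unfold nrm2
  have hint : Integrable (fun x => ‖v x‖ ^ 2) := by
    refine myIntegrable (by fun_prop) hvs (fun z hz => ?_)
    rw [image_eq_zero_of_notMem_tsupport hz]; simp
  rw [integral_pos_iff_support_of_nonneg (fun x => by positivity) hint]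
  have hsupp : Function.support (fun x => ‖v x‖ ^ 2) = Function.support v := by
    ext x; simp [Function.mem_support]
  rw [hsupp]
  refine IsOpen.measure_pos volume (isOpen_compl_singleton.preimage hv) ?_
  obtain ⟨x, hx⟩ := Function.ne_iff.mp hv0
  exact ⟨x, hx⟩

lemma nrm2_nonneg {k : ℕ} (v : (Fin k → ℝ) → ℂ) : 0 ≤ nrm2 v :=
  integral_nonneg (fun x => by positivity)

lemma qf_nrm2_smul (v : (Fin m → ℝ) → ℂ)
    (hv : ContDiff ℝ (⊤ : ℕ∞) v) (c : ℂ) :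
    qf 1 g (c • v) = ‖c‖ ^ 2 * qf 1 g v ∧ nrm2 (c • v) = ‖c‖ ^ 2 * nrm2 v := by
  have hsum : ∀ x, ∑ i, ‖pd i (c • v) x‖ ^ 2 = ‖c‖ ^ 2 * ∑ i, ‖pd i v x‖ ^ 2 := by
    intro x
    rw [Finset.mul_sum]
    refine Finset.sum_congr rfl (fun i _ => ?_)
    rw [pd_const_smul i v hv c, norm_mul, mul_pow]
  constructor
  · unfold qf
    have key : ∀ x, (1 * ∑ i, ‖pd i (c • v) x‖ ^ 2 + g x * ‖(c • v) x‖ ^ 2)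
        = ‖c‖ ^ 2 * (1 * ∑ i, ‖pd i v x‖ ^ 2 + g x * ‖v x‖ ^ 2) := by
      intro x
      rw [hsum x]
      simp only [Pi.smul_apply, smul_eq_mul, norm_mul, mul_pow]
      ring
    simp only [key]
    exact MeasureTheory.integral_const_mul _ _
  · unfold nrm2
    have key : ∀ x, ‖(c • v) x‖ ^ 2 = ‖c‖ ^ 2 * ‖v x‖ ^ 2 := by
      intro x
      simp only [Pi.smul_apply, smul_eq_mul, norm_mul, mul_pow]
    simp only [key]
    exact MeasureTheory.integral_const_mul _ _

/-- The key min-max bound : `μ₁ ‖v‖² ≤ ⟨(D² + g)v, v⟩` for all test functions. -/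
lemma mu_le (hm : 1 ≤ m) (hg : GHyp m a g) (v : (Fin m → ℝ) → ℂ)
    (hv : ContDiff ℝ (⊤ : ℕ∞) v) (hvs : HasCompactSupport v) :
    lambdaK m 1 g 1 * nrm2 v ≤ qf 1 g v := by
  have qf_nonneg : ∀ w : (Fin m → ℝ) → ℂ, 0 ≤ qf 1 g w := by
    intro w
    refine integral_nonneg (fun x => ?_)
    have h := g_nonneg hg x
    positivity
  have hbdd : ∀ r ∈ { r : ℝ | ∃ E : Submodule ℂ ((Fin m → ℝ) → ℂ),
      Module.finrank ℂ E = 1 ∧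
      (∀ u ∈ E, ContDiff ℝ (⊤ : ℕ∞) u ∧ HasCompactSupport u) ∧
      (∀ u ∈ E, qf 1 g u ≤ r * nrm2 u) }, 0 ≤ r := by
    rintro r ⟨E, hrank, hreg, hineq⟩
    have hEne : E ≠ ⊥ := by
      intro h
      rw [h] at hrank
      simp at hrank
    obtain ⟨u₀, hu₀E, hu₀⟩ := (Submodule.ne_bot_iff E).mp hEne
    have h1 : qf 1 g u₀ ≤ r * nrm2 u₀ := hineq u₀ hu₀E
    have h2 : 0 ≤ qf 1 g u₀ := qf_nonneg u₀
    have h3 : 0 < nrm2 u₀ :=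
      nrm2_pos u₀ (hreg u₀ hu₀E).1.continuous (hreg u₀ hu₀E).2 hu₀
    nlinarith
  rcases eq_or_ne v 0 with rfl | hv0
  · have h1 : nrm2 (0 : (Fin m → ℝ) → ℂ) = 0 := by
      unfold nrm2; simp
    rw [h1, mul_zero]
    exact qf_nonneg 0
  · have hN : 0 < nrm2 v := nrm2_pos v hv.continuous hvs hv0
    have hmem : qf 1 g v / nrm2 v ∈ { r : ℝ | ∃ E : Submodule ℂ ((Fin m → ℝ) → ℂ),
        Module.finrank ℂ E = 1 ∧
        (∀ u ∈ E, ContDiff ℝ (⊤ : ℕ∞) u ∧ HasCompactSupport u) ∧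
        (∀ u ∈ E, qf 1 g u ≤ r * nrm2 u) } := by
      refine ⟨Submodule.span ℂ {v}, finrank_span_singleton hv0, ?_, ?_⟩
      · intro u hu
        obtain ⟨c, rfl⟩ := Submodule.mem_span_singleton.mp hu
        refine ⟨hv.const_smul c, HasCompactSupport.intro hvs (fun x hx => ?_)⟩
        simp [image_eq_zero_of_notMem_tsupport hx]
      · intro u hu
        obtain ⟨c, rfl⟩ := Submodule.mem_span_singleton.mp hu
        obtain ⟨hq, hn⟩ := qf_nrm2_smul v hv c
        rw [hq, hn]
        rw [show qf 1 g v / nrm2 v * (‖c‖ ^ 2 * nrm2 v) = ‖c‖ ^ 2 * qf 1 g v by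
          field_simp]
    have hle : lambdaK m 1 g 1 ≤ qf 1 g v / nrm2 v := by
      unfold lambdaK
      exact csInf_le ⟨0, fun r hr => hbdd r hr⟩ hmem
    have h2 := mul_le_mul_of_nonneg_right hle hN.le
    rwa [div_mul_cancel₀ _ hN.ne'] at h2

/-- Scaling : lowest eigenvalue of `D² + c·g` is `μ₁ c^{2/(2+a)}`, as a lower form bound. -/
lemma scaled_bound (hm : 1 ≤ m) (hg : GHyp m a g) (v : (Fin m → ℝ) → ℂ)
    (hv : ContDiff ℝ (⊤ : ℕ∞) v) (hvs : HasCompactSupport v) (c : ℝ) (hc : 0 < c) :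
    lambdaK m 1 g 1 * (c ^ (2 / (2 + a)) * ∫ y, ‖v y‖ ^ 2) ≤
      (∫ y, ∑ i, ‖pd i v y‖ ^ 2) + c * ∫ y, g y * ‖v y‖ ^ 2 := by
  have h2a : (0:ℝ) < 2 + a := by linarith [hg.a_pos]
  set p : ℝ := -(2 + a)⁻¹ with hp
  set s : ℝ := c ^ p with hsdef
  have hspos : 0 < s := Real.rpow_pos_of_pos hc p
  set w : (Fin m → ℝ) → ℂ := fun y => v (s • y) with hw
  have hwsm : ContDiff ℝ (⊤ : ℕ∞) w := hv.comp (contDiff_id.const_smul s)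
  have hws : HasCompactSupport w := by
    refine HasCompactSupport.intro (hvs.smul s⁻¹) (fun y hy => ?_)
    by_contra h
    exact hy ⟨s • y, subset_tsupport v h, by simp [smul_smul, inv_mul_cancel₀ hspos.ne']⟩
  have hpd : ∀ (i : Fin m) y, pd i w y = s • pd i v (s • y) := by
    intro i y
    have h1 : HasFDerivAt (fun y : Fin m → ℝ => s • y)
        (s • ContinuousLinearMap.id ℝ (Fin m → ℝ)) y := (hasFDerivAt_id y).const_smul s
    have h2 : HasFDerivAt v (fderiv ℝ v (s • y)) (s • y) :=
      (hv.differentiable my_top_le (s • y)).hasFDerivAt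
    have h3 := h2.comp y h1
    show fderiv ℝ w y (Pi.single i 1) = s • fderiv ℝ v (s • y) (Pi.single i 1)
    rw [show fderiv ℝ w y = (fderiv ℝ v (s • y)).comp
      (s • ContinuousLinearMap.id ℝ (Fin m → ℝ)) from HasFDerivAt.fderiv (by exact h3)]
    simp
  have hmu := mu_le hm hg w hwsm hws
  have hIK : Integrable (fun z => ∑ i, ‖pd i v z‖ ^ 2) := by
    refine myIntegrable ?_ hvs (fun z hz => ?_)
    · exact continuous_finset_sum _ (fun i _ => (continuous_pd i v hv).norm.pow 2)
    · simp [pd_zero_of_nmem _ v hz]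
  have hIG : Integrable (fun z => g z * ‖v z‖ ^ 2) := by
    refine myIntegrable ((g_cont hm hg).mul (hv.continuous.norm.pow 2)) hvs (fun z hz => ?_)
    rw [image_eq_zero_of_notMem_tsupport hz]; simp
  set t : ℝ := |((s ^ m)⁻¹)| with ht
  have htpos : 0 < t := abs_pos.mpr (inv_ne_zero (pow_ne_zero _ hspos.ne'))
  have hnrm2w : nrm2 w = t * ∫ y, ‖v y‖ ^ 2 := by
    show ∫ y, ‖v (s • y)‖ ^ 2 = t * ∫ y, ‖v y‖ ^ 2
    have h := Measure.integral_comp_smul volume (fun y => ‖v y‖ ^ 2) s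
    simpa [smul_eq_mul, Module.finrank_fin_fun, ht, abs_inv, abs_pow] using h
  have hqfw : qf 1 g w = t * (s ^ 2 * (∫ y, ∑ i, ‖pd i v y‖ ^ 2)
      + (s ^ a)⁻¹ * ∫ y, g y * ‖v y‖ ^ 2) := by
    unfold qf
    have key : ∀ y, (1 * ∑ i, ‖pd i w y‖ ^ 2 + g y * ‖w y‖ ^ 2)
        = (fun z => s ^ 2 * ∑ i, ‖pd i v z‖ ^ 2 + (s ^ a)⁻¹ * (g z * ‖v z‖ ^ 2)) (s • y) := by
      intro y
      simp only [one_mul]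
      have hgy : g y = (s ^ a)⁻¹ * g (s • y) := by
        rw [hg.homog s hspos y]
        field_simp
      have hsumw : ∑ i, ‖pd i w y‖ ^ 2 = s ^ 2 * ∑ i, ‖pd i v (s • y)‖ ^ 2 := by
        rw [Finset.mul_sum]
        refine Finset.sum_congr rfl fun i _ => ?_
        rw [hpd i y, norm_smul, Real.norm_eq_abs, abs_of_pos hspos, mul_pow]
      rw [hsumw, hgy, hw]
      ring
    simp only [key]
    rw [Measure.integral_comp_smul volume
      (fun z => s ^ 2 * ∑ i, ‖pd i v z‖ ^ 2 + (s ^ a)⁻¹ * (g z * ‖v z‖ ^ 2)) s,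
      Module.finrank_fin_fun, smul_eq_mul]
    congr 1
    rw [integral_add (hIK.const_mul _) (hIG.const_mul _),
      MeasureTheory.integral_const_mul, MeasureTheory.integral_const_mul]
  have hmain : lambdaK m 1 g 1 * (∫ y, ‖v y‖ ^ 2) ≤
      s ^ 2 * (∫ y, ∑ i, ‖pd i v y‖ ^ 2) + (s ^ a)⁻¹ * (∫ y, g y * ‖v y‖ ^ 2) := by
    rw [hnrm2w, hqfw] at hmu
    rw [show lambdaK m 1 g 1 * (t * ∫ y, ‖v y‖ ^ 2)
      = t * (lambdaK m 1 g 1 * ∫ y, ‖v y‖ ^ 2) from by ring] at hmu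
    rw [show t * (s ^ 2 * (∫ y, ∑ i, ‖pd i v y‖ ^ 2)
      + (s ^ a)⁻¹ * ∫ y, g y * ‖v y‖ ^ 2) = t * (s ^ 2 * (∫ y, ∑ i, ‖pd i v y‖ ^ 2)
      + (s ^ a)⁻¹ * (∫ y, g y * ‖v y‖ ^ 2)) from rfl] at hmu
    exact le_of_mul_le_mul_left hmu htpos
  have e1 : c ^ (2 / (2 + a)) * s ^ 2 = 1 := by
    rw [hsdef, ← Real.rpow_natCast (c ^ p) 2, ← Real.rpow_mul hc.le, ← Real.rpow_add hc]
    rw [show 2 / (2 + a) + p * ((2:ℕ):ℝ) = 0 from by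
      rw [hp]; push_cast; field_simp; ring]
    exact Real.rpow_zero c
  have e2 : c ^ (2 / (2 + a)) * (s ^ a)⁻¹ = c := by
    rw [hsdef, ← Real.rpow_mul hc.le, ← Real.rpow_neg hc.le, ← Real.rpow_add hc]
    rw [show 2 / (2 + a) + -(p * a) = 1 from by
      rw [hp]; field_simp]
    exact Real.rpow_one c
  have hq : (0:ℝ) ≤ c ^ (2 / (2 + a)) := (Real.rpow_pos_of_pos hc _).le
  have hfin := mul_le_mul_of_nonneg_left hmain hq
  calc lambdaK m 1 g 1 * (c ^ (2 / (2 + a)) * ∫ y, ‖v y‖ ^ 2)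
      = c ^ (2 / (2 + a)) * (lambdaK m 1 g 1 * ∫ y, ‖v y‖ ^ 2) := by ring
    _ ≤ c ^ (2 / (2 + a)) * (s ^ 2 * (∫ y, ∑ i, ‖pd i v y‖ ^ 2)
        + (s ^ a)⁻¹ * ∫ y, g y * ‖v y‖ ^ 2) := hfin
    _ = (c ^ (2 / (2 + a)) * s ^ 2) * (∫ y, ∑ i, ‖pd i v y‖ ^ 2)
        + (c ^ (2 / (2 + a)) * (s ^ a)⁻¹) * ∫ y, g y * ‖v y‖ ^ 2 := by ring
    _ = (∫ y, ∑ i, ‖pd i v y‖ ^ 2) + c * ∫ y, g y * ‖v y‖ ^ 2 := by rw [e1, e2]; ring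

end Aux


/-- estimate (1.10). The form inequality
`Ĥ^ℏ ≥ ℏ²D_x² + μ₁ f^{2/(2+a)}(x)` : for every test function `u`,
`⟨Ĥ^ℏu, u⟩ ≥ ∫∫ (ℏ²|∇_x u|² + μ₁ f^{2/(2+a)}(x)|u|²) dx dy`. -/
theorem statement12 {n m : ℕ} (hn : 1 ≤ n) (hm : 1 ≤ m) (a : ℝ)
    (f : (Fin n → ℝ) → ℝ) (g : (Fin m → ℝ) → ℝ)
    (hg : GHyp m a g)
    (hfsmooth : ContDiff ℝ (⊤ : ℕ∞) f)
    (hfpos : ∃ c > (0 : ℝ), ∀ x, c ≤ f x)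
    (hfder : ∀ k : ℕ, ∃ C : ℝ, ∀ x, ‖iteratedFDeriv ℝ k f x‖ ≤ C * (|f x| + 1))
    (ℏ : ℝ) (hℏ : 0 < ℏ) :
    ∀ u : (Fin n → ℝ) × (Fin m → ℝ) → ℂ,
      ContDiff ℝ (⊤ : ℕ∞) u → HasCompactSupport u →
      (∫ z, (ℏ ^ 2 * ∑ i, ‖pdx i u z‖ ^ 2 +
          lambdaK m 1 g 1 * f z.1 ^ (2 / (2 + a)) * ‖u z‖ ^ 2)) ≤
        qf2 n m (ℏ ^ 2) 1 (Wprod f g) u := by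
  intro u hu hus
  obtain ⟨c₀, hc₀, hfge⟩ := hfpos
  have hfx : ∀ x, 0 < f x := fun x => lt_of_lt_of_le hc₀ (hfge x)
  have hcfderiv : Continuous (fderiv ℝ u) := hu.continuous_fderiv my_top_le
  have hpdx_cont : ∀ i : Fin n, Continuous (pdx i u) :=
    fun i => hcfderiv.clm_apply continuous_const
  have hpdy_cont : ∀ i : Fin m, Continuous (pdy i u) :=
    fun i => hcfderiv.clm_apply continuous_const
  have hfd0 : ∀ z ∉ tsupport u, fderiv ℝ u z = 0 := by
    intro z hz
    by_contra h
    exact hz (support_fderiv_subset ℝ (Function.mem_support.mpr h))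
  have hpdx0 : ∀ (i : Fin n) z, z ∉ tsupport u → pdx i u z = 0 := by
    intro i z hz
    unfold pdx
    rw [hfd0 z hz]; rfl
  have hpdy0 : ∀ (i : Fin m) z, z ∉ tsupport u → pdy i u z = 0 := by
    intro i z hz
    unfold pdy
    rw [hfd0 z hz]; rfl
  have hfc : Continuous fun z : (Fin n → ℝ) × (Fin m → ℝ) => f z.1 ^ (2 / (2 + a)) :=
    (hfsmooth.continuous.comp continuous_fst).rpow_const
      (fun z => Or.inl (hfx z.1).ne')
  set D : (Fin n → ℝ) × (Fin m → ℝ) → ℝ := fun z => ∑ i, ‖pdy i u z‖ ^ 2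
    + f z.1 * g z.2 * ‖u z‖ ^ 2
    - lambdaK m 1 g 1 * f z.1 ^ (2 / (2 + a)) * ‖u z‖ ^ 2 with hD
  have hA_int : Integrable (fun z => ℏ ^ 2 * ∑ i, ‖pdx i u z‖ ^ 2 +
      lambdaK m 1 g 1 * f z.1 ^ (2 / (2 + a)) * ‖u z‖ ^ 2) := by
    refine myIntegrable ?_ hus (fun z hz => ?_)
    · exact (continuous_const.mul (continuous_finset_sum _
        (fun i _ => (hpdx_cont i).norm.pow 2))).add
        ((continuous_const.mul hfc).mul (hu.continuous.norm.pow 2))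
    · simp [show ∀ i : Fin n, pdx i u z = 0 from fun i => hpdx0 i z hz,
        image_eq_zero_of_notMem_tsupport hz]
  have hD_int : Integrable D := by
    refine myIntegrable ?_ hus (fun z hz => ?_)
    · refine ((continuous_finset_sum _ (fun i _ => (hpdy_cont i).norm.pow 2)).add
        (((hfsmooth.continuous.comp continuous_fst).mul
          ((g_cont hm hg).comp continuous_snd)).mul (hu.continuous.norm.pow 2))).sub
        ((continuous_const.mul hfc).mul (hu.continuous.norm.pow 2))
    · simp [hD, show ∀ i : Fin m, pdy i u z = 0 from fun i => hpdy0 i z hz,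
        image_eq_zero_of_notMem_tsupport hz]
  have hq : qf2 n m (ℏ ^ 2) 1 (Wprod f g) u =
      (∫ z, (ℏ ^ 2 * ∑ i, ‖pdx i u z‖ ^ 2 +
        lambdaK m 1 g 1 * f z.1 ^ (2 / (2 + a)) * ‖u z‖ ^ 2)) + ∫ z, D z := by
    unfold qf2 Wprod
    rw [← integral_add hA_int hD_int]
    congr 1
    funext z
    simp only [hD]
    ring
  have hDnn : (0:ℝ) ≤ ∫ z, D z := by
    rw [Measure.volume_eq_prod, MeasureTheory.integral_prod D
      (by rw [← Measure.volume_eq_prod]; exact hD_int)]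
    refine integral_nonneg fun x => ?_
    show (0:ℝ) ≤ ∫ y, D (x, y)
    set v : (Fin m → ℝ) → ℂ := fun y => u (x, y) with hv
    have hvsm : ContDiff ℝ (⊤ : ℕ∞) v := hu.comp (contDiff_const.prodMk contDiff_id)
    have hvcs : HasCompactSupport v := by
      refine HasCompactSupport.intro (hus.image continuous_snd) (fun y hy => ?_)
      by_contra h
      exact hy ⟨(x, y), subset_tsupport u h, rfl⟩
    have hpdveq : ∀ (i : Fin m) y, pd i v y = pdy i u (x, y) := by
      intro i y
      have h1 : HasFDerivAt (fun y : Fin m → ℝ => ((x, y) : (Fin n → ℝ) × (Fin m → ℝ)))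
          ((0 : (Fin m → ℝ) →L[ℝ] (Fin n → ℝ)).prod (ContinuousLinearMap.id ℝ (Fin m → ℝ)))
          y := (hasFDerivAt_const x y).prodMk (hasFDerivAt_id y)
      have h2 := ((hu.differentiable my_top_le (x, y)).hasFDerivAt).comp y h1
      show fderiv ℝ v y (Pi.single i 1) = fderiv ℝ u (x, y) (0, Pi.single i 1)
      rw [show fderiv ℝ v y = (fderiv ℝ u (x, y)).comp
        ((0 : (Fin m → ℝ) →L[ℝ] (Fin n → ℝ)).prod (ContinuousLinearMap.id ℝ (Fin m → ℝ)))
        from HasFDerivAt.fderiv (by exact h2)]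
      simp
    have hIK : Integrable (fun y => ∑ i, ‖pd i v y‖ ^ 2) := by
      refine myIntegrable ?_ hvcs (fun z hz => ?_)
      · exact continuous_finset_sum _ (fun i _ => (continuous_pd i v hvsm).norm.pow 2)
      · simp [pd_zero_of_nmem _ v hz]
    have hIG : Integrable (fun y => g y * ‖v y‖ ^ 2) := by
      refine myIntegrable ((g_cont hm hg).mul (hvsm.continuous.norm.pow 2)) hvcs
        (fun z hz => ?_)
      rw [image_eq_zero_of_notMem_tsupport hz]; simp
    have hIN : Integrable (fun y => ‖v y‖ ^ 2) := by
      refine myIntegrable (hvsm.continuous.norm.pow 2) hvcs (fun z hz => ?_)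
      rw [image_eq_zero_of_notMem_tsupport hz]; simp
    have key : ∀ y, D (x, y) = (∑ i, ‖pd i v y‖ ^ 2) + f x * (g y * ‖v y‖ ^ 2)
        - lambdaK m 1 g 1 * (f x ^ (2 / (2 + a)) * ‖v y‖ ^ 2) := by
      intro y
      simp only [hD, hv]
      rw [show ∑ i, ‖pdy i u (x, y)‖ ^ 2 = ∑ i, ‖pd i v y‖ ^ 2 from
        Finset.sum_congr rfl fun i _ => by rw [hpdveq i y]]
      simp only [hv]
      ring
    have split : ∫ y, D (x, y) = (∫ y, ∑ i, ‖pd i v y‖ ^ 2)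
        + f x * (∫ y, g y * ‖v y‖ ^ 2)
        - lambdaK m 1 g 1 * (f x ^ (2 / (2 + a)) * ∫ y, ‖v y‖ ^ 2) := by
      simp only [key]
      have hI1 : Integrable (fun y => (∑ i, ‖pd i v y‖ ^ 2) + f x * (g y * ‖v y‖ ^ 2)) :=
        hIK.add (hIG.const_mul (f x))
      have hI2 : Integrable
          (fun y => lambdaK m 1 g 1 * (f x ^ (2 / (2 + a)) * ‖v y‖ ^ 2)) :=
        (hIN.const_mul _).const_mul _
      have hI3 : Integrable (fun y => f x * (g y * ‖v y‖ ^ 2)) := hIG.const_mul (f x)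
      rw [integral_sub hI1 hI2, integral_add hIK hI3, MeasureTheory.integral_const_mul,
        MeasureTheory.integral_const_mul, MeasureTheory.integral_const_mul]
    rw [split]
    have hsc := scaled_bound hm hg v hvsm hvcs (f x) (hfx x)
    linarith
  rw [hq]
  linarith
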